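/- For n ≥ 1, let H_n be the real symmetric matrix indexed by the 2^n vertices x : Fin n → ZMod 2 of the n-dimensional hypercube, with H_n(x, y) = 1 if x and y differ in exactly one coordinate (Hamming distance 1) and H_n(x, y) = 0 otherwise, regarded as a complex matrix. Then exp(−i (π/2) H_n) = (−i)^n · T_n, where T_n is the permutation matrix with T_n(x, y) = 1 if y(j) = x(j) + 1 for every coordinate j (i.e., y is the antipode of x) and T_n(x, y) = 0 otherwise. -/

import Mathlib

open Matrix

/-- Adjacency matrix of the `n`-dimensional hypercube: vertices are `x : Fin n → ZMod 2`,
adjacent iff they differ in exactly one coordinate. -/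
def cubeMatrix (n : ℕ) : Matrix (Fin n → ZMod 2) (Fin n → ZMod 2) ℝ :=
  Matrix.of fun x y =>
    if (Finset.univ.filter fun j => x j ≠ y j).card = 1 then 1 else 0

/-- The antipodal permutation matrix: `T(x, y) = 1` iff `y(j) = x(j) + 1` for all `j`. -/
def antipodeMatrix (n : ℕ) : Matrix (Fin n → ZMod 2) (Fin n → ZMod 2) ℂ :=
  Matrix.of fun x y => if ∀ j, y j = x j + 1 then 1 else 0

namespace Stmt13Aux

/-- Permutation matrix for translation by `v`. -/
def shiftMat (n : ℕ) (v : Fin n → ZMod 2) :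
    Matrix (Fin n → ZMod 2) (Fin n → ZMod 2) ℂ :=
  Matrix.of fun x y => if y = x + v then 1 else 0

lemma shiftMat_mul (n : ℕ) (u v : Fin n → ZMod 2) :
    shiftMat n u * shiftMat n v = shiftMat n (u + v) := by
  ext x y
  simp only [shiftMat, mul_apply, of_apply, ite_mul, one_mul, zero_mul]
  rw [Finset.sum_ite_eq' Finset.univ (x + u) (fun z => if y = z + v then (1 : ℂ) else 0)]
  simp [add_assoc]

lemma shiftMat_zero (n : ℕ) : shiftMat n 0 = 1 := by
  ext x y
  simp [shiftMat, one_apply, eq_comm]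

lemma shiftMat_sq (n : ℕ) (v : Fin n → ZMod 2) :
    shiftMat n v * shiftMat n v = 1 := by
  have hv : v + v = 0 := by
    funext j
    have h : ∀ a : ZMod 2, a + a = 0 := by decide
    exact h (v j)
  rw [shiftMat_mul, hv, shiftMat_zero]

lemma shiftMat_pow_even (n : ℕ) (v : Fin n → ZMod 2) (m : ℕ) :
    shiftMat n v ^ (2 * m) = 1 := by
  rw [pow_mul, sq, shiftMat_sq, one_pow]

lemma shiftMat_pow_odd (n : ℕ) (v : Fin n → ZMod 2) (m : ℕ) :
    shiftMat n v ^ (2 * m + 1) = shiftMat n v := by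
  rw [pow_succ, shiftMat_pow_even, one_mul]

noncomputable def cc : ℂ := -(Complex.I * ((Real.pi : ℂ) / 2))

noncomputable def rr : ℂ := (Real.pi : ℂ) / 2

lemma cc_sq : cc ^ 2 = -rr ^ 2 := by
  have h : cc ^ 2 = Complex.I ^ 2 * rr ^ 2 := by rw [cc, rr]; ring
  rw [h, Complex.I_sq]; ring

lemma cc_pow_even (m : ℕ) : cc ^ (2 * m) = (-1) ^ m * rr ^ (2 * m) := by
  rw [pow_mul, cc_sq, neg_pow, ← pow_mul]

lemma cc_pow_odd (m : ℕ) :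
    cc ^ (2 * m + 1) = -Complex.I * ((-1) ^ m * rr ^ (2 * m + 1)) := by
  rw [pow_succ, cc_pow_even, cc, rr, pow_succ]; ring

lemma cos_rr : Complex.cos rr = 0 := by
  have h : rr = ((Real.pi / 2 : ℝ) : ℂ) := by rw [rr]; push_cast; ring
  rw [h, ← Complex.ofReal_cos, Real.cos_pi_div_two, Complex.ofReal_zero]

lemma sin_rr : Complex.sin rr = 1 := by
  have h : rr = ((Real.pi / 2 : ℝ) : ℂ) := by rw [rr]; push_cast; ring
  rw [h, ← Complex.ofReal_sin, Real.sin_pi_div_two, Complex.ofReal_one]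

/-- The key exponential computation: for any translation matrix `A` (which squares to 1),
`exp(cc • A) = (-i) • A`. -/
lemma exp_cc_smul (n : ℕ) (v : Fin n → ZMod 2) :
    NormedSpace.exp (cc • shiftMat n v) = (-Complex.I) • shiftMat n v := by
  letI : SeminormedRing (Matrix (Fin n → ZMod 2) (Fin n → ZMod 2) ℂ) :=
    Matrix.linftyOpSemiNormedRing
  letI : NormedRing (Matrix (Fin n → ZMod 2) (Fin n → ZMod 2) ℂ) :=
    Matrix.linftyOpNormedRing
  letI : NormedAlgebra ℂ (Matrix (Fin n → ZMod 2) (Fin n → ZMod 2) ℂ) :=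
    Matrix.linftyOpNormedAlgebra
  set A := shiftMat n v with hA
  rw [NormedSpace.exp_eq_tsum ℂ]
  set f : ℕ → Matrix (Fin n → ZMod 2) (Fin n → ZMod 2) ℂ :=
    fun k => ((k.factorial : ℂ))⁻¹ • (cc • A) ^ k with hf
  have heven : HasSum (fun m : ℕ => f (2 * m))
      ((0 : ℂ) • (1 : Matrix (Fin n → ZMod 2) (Fin n → ZMod 2) ℂ)) := by
    have h1 := (Complex.hasSum_cos rr).smul_const
      (1 : Matrix (Fin n → ZMod 2) (Fin n → ZMod 2) ℂ)
    rw [cos_rr] at h1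
    convert h1 using 2 with m
    rw [hf]
    simp only []
    rw [smul_pow, shiftMat_pow_even, smul_smul, cc_pow_even]
    congr 1
    rw [div_eq_mul_inv]
    ring
  have hodd : HasSum (fun m : ℕ => f (2 * m + 1))
      ((-Complex.I) • A) := by
    have h1 := ((Complex.hasSum_sin rr).mul_left (-Complex.I)).smul_const A
    rw [sin_rr, mul_one] at h1
    convert h1 using 2 with m
    rw [hf]
    simp only []
    rw [smul_pow, shiftMat_pow_odd, smul_smul, cc_pow_odd]
    congr 1
    rw [div_eq_mul_inv]
    ring
  have htot : HasSum f ((0 : ℂ) • (1 : Matrix (Fin n → ZMod 2) (Fin n → ZMod 2) ℂ) +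
      (-Complex.I) • A) := heven.even_add_odd hodd
  show (∑' k, f k) = -Complex.I • A
  rw [htot.tsum_eq, zero_smul, zero_add]

lemma exp_sum_eq (n : ℕ) (s : Finset (Fin n)) :
    NormedSpace.exp (∑ j ∈ s, cc • shiftMat n (Pi.single j 1)) =
      (-Complex.I) ^ s.card • shiftMat n (∑ j ∈ s, Pi.single j 1) := by
  letI : SeminormedRing (Matrix (Fin n → ZMod 2) (Fin n → ZMod 2) ℂ) :=
    Matrix.linftyOpSemiNormedRing
  letI : NormedRing (Matrix (Fin n → ZMod 2) (Fin n → ZMod 2) ℂ) :=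
    Matrix.linftyOpNormedRing
  letI : NormedAlgebra ℂ (Matrix (Fin n → ZMod 2) (Fin n → ZMod 2) ℂ) :=
    Matrix.linftyOpNormedAlgebra
  classical
  induction s using Finset.induction_on with
  | empty => simp [shiftMat_zero]
  | @insert a s ha ih =>
    have hcomm : Commute (cc • shiftMat n (Pi.single a 1))
        (∑ j ∈ s, cc • shiftMat n (Pi.single j 1)) := by
      apply Commute.sum_right
      intro j _
      have h : Commute (shiftMat n (Pi.single a 1)) (shiftMat n (Pi.single j 1)) := by
        unfold Commute SemiconjBy
        rw [shiftMat_mul, shiftMat_mul, add_comm]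
      exact (h.smul_left cc).smul_right cc
    letI : NormedAlgebra ℚ (Matrix (Fin n → ZMod 2) (Fin n → ZMod 2) ℂ) :=
      NormedAlgebra.restrictScalars ℚ ℂ _
    rw [Finset.sum_insert ha]
    erw [NormedSpace.exp_add_of_commute hcomm]
    erw [exp_cc_smul, ih]
    rw [Finset.card_insert_of_notMem ha, Finset.sum_insert ha, ← shiftMat_mul,
      smul_mul_smul_comm, ← pow_succ']

lemma cube_decomp (n : ℕ) :
    (cubeMatrix n).map Complex.ofReal = ∑ j, shiftMat n (Pi.single j 1) := by
  ext x y
  have key : ∀ j : Fin n, (y = x + Pi.single j 1) ↔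
      (Finset.univ.filter fun k => x k ≠ y k) = {j} := by
    intro j
    constructor
    · rintro rfl
      ext k
      simp only [Finset.mem_filter, Finset.mem_univ, true_and, Finset.mem_singleton,
        Pi.add_apply]
      by_cases hk : k = j
      · subst hk
        have h2 : ∀ a : ZMod 2, a ≠ a + 1 := by decide
        simp [Pi.single_eq_same, h2 (x k)]
      · simp [Pi.single_eq_of_ne hk, hk]
    · intro h
      funext k
      by_cases hk : k = j
      · subst hk
        have hm : k ∈ Finset.univ.filter fun m => x m ≠ y m := by
          rw [h]; exact Finset.mem_singleton_self k
        simp only [Finset.mem_filter, Finset.mem_univ, true_and] at hm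
        have h2 : ∀ a b : ZMod 2, a ≠ b → b = a + 1 := by decide
        simp [Pi.single_eq_same, h2 _ _ hm]
      · have hm : k ∉ ({j} : Finset (Fin n)) := by simp [hk]
        rw [← h] at hm
        simp only [Finset.mem_filter, Finset.mem_univ, true_and, not_not] at hm
        simp [Pi.single_eq_of_ne hk, hm]
  simp only [map_apply, cubeMatrix, of_apply, Matrix.sum_apply, shiftMat]
  simp_rw [key]
  rw [apply_ite Complex.ofReal, Complex.ofReal_one, Complex.ofReal_zero]
  by_cases h : (Finset.univ.filter fun k => x k ≠ y k).card = 1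
  · obtain ⟨j₀, hj₀⟩ := Finset.card_eq_one.mp h
    rw [if_pos h]
    rw [Finset.sum_eq_single j₀]
    · rw [if_pos hj₀]
    · intro b _ hb
      rw [if_neg]
      rw [hj₀]
      simp [Finset.singleton_inj]
      exact fun hh => hb hh.symm
    · intro hb; exact absurd (Finset.mem_univ j₀) hb
  · rw [if_neg h]
    rw [Finset.sum_eq_zero]
    intro j _
    rw [if_neg]
    intro hj
    rw [hj] at h
    simp at h

lemma shiftMat_ones (n : ℕ) : shiftMat n (∑ j, Pi.single j 1) = antipodeMatrix n := by
  have hsum : (∑ j : Fin n, Pi.single j (1 : ZMod 2)) = fun _ : Fin n => (1 : ZMod 2) := by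
    funext k
    classical
    rw [Finset.sum_apply]
    simp [Pi.single_apply]
  rw [hsum]
  ext x y
  simp only [shiftMat, antipodeMatrix, of_apply]
  congr 1
  simp only [eq_iff_iff]
  constructor
  · rintro rfl j; rfl
  · intro h; funext j; exact h j

end Stmt13Aux

open Stmt13Aux in
/-- `exp(−i(π/2) H_n) = (−i)^n T_n`: perfect state transfer between
antipodal vertices of the hypercube at time `π/2`, with phase `(−i)^n`. -/
theorem stmt13 (n : ℕ) (hn : 1 ≤ n) :
    NormedSpace.exp ((-(Complex.I * ((Real.pi : ℂ) / 2))) •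
        (cubeMatrix n).map Complex.ofReal) = (-Complex.I) ^ n • antipodeMatrix n := by
  have hc : (-(Complex.I * ((Real.pi : ℂ) / 2))) = cc := rfl
  rw [hc, cube_decomp, Finset.smul_sum, exp_sum_eq, shiftMat_ones,
    Finset.card_univ, Fintype.card_fin]
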